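/- Assume in addition that f″ > 0 (f is strictly convex) and let b_− < b_+. Then there exists no traveling-wave solution: there are no constant s and C¹ function b : ℝ → ℝ with Q∘b′ differentiable, b(−∞) = b_−, b(+∞) = b_+, b′(ξ) → 0 as |ξ| → ∞, such that u(t,x) = b(x − st) is a classical solution of u_t + f(u)_x = Q(u_x)_x (Section 2.2, case b_− < b_+). -/

import Mathlib

open Set Filter Topology

/-- Section 2.2, case `b_- < b_+`: if `f` is strictly convex (`f'' > 0`) then there is no
classical traveling-wave solution `u(t,x) = b(x - s t)` of `u_t + f(u)_x = Q(u_x)_x`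
with `b(-∞) = b_- < b_+ = b(+∞)` and `b'(ξ) → 0` as `|ξ| → ∞`. -/
theorem stmt_19 (f Q : ℝ → ℝ) (Qm Qp : ℝ)
    (hf : ContDiff ℝ 1 f) (hQ : ContDiff ℝ 2 Q)
    (hf0 : f 0 = 0) (hQ0 : Q 0 = 0) (hQ' : ∀ s : ℝ, 0 < deriv Q s)
    (hQm : Tendsto Q atBot (nhds Qm)) (hQmneg : Qm < 0)
    (hQp : Tendsto Q atTop (nhds Qp)) (hQppos : 0 < Qp)
    (hf2 : Differentiable ℝ (deriv f)) (hconv : ∀ s : ℝ, 0 < deriv (deriv f) s)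
    (bm bp : ℝ) (hlt : bm < bp) :
    ¬ ∃ (s : ℝ) (b : ℝ → ℝ),
      ContDiff ℝ 1 b ∧
      Differentiable ℝ (fun ξ => Q (deriv b ξ)) ∧
      Tendsto b atBot (nhds bm) ∧ Tendsto b atTop (nhds bp) ∧
      Tendsto (deriv b) atBot (nhds 0) ∧ Tendsto (deriv b) atTop (nhds 0) ∧
      (∀ t x : ℝ, 0 < t →
        deriv (fun τ => b (x - s * τ)) t
          + deriv (fun y => f (b (y - s * t))) x
          = deriv (fun y => Q (deriv (fun z => b (z - s * t)) y)) x) := by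
  rintro ⟨s, b, hb, hQb, hbm, hbp, hb'm, hb'p, hpde⟩
  have hbdiff : Differentiable ℝ b := hb.differentiable one_ne_zero
  have hfdiff : Differentiable ℝ f := hf.differentiable one_ne_zero
  have hQdiff : Differentiable ℝ Q := hQ.differentiable two_ne_zero
  -- inner derivative identity
  have hinner : ∀ (c y : ℝ), deriv (fun z => b (z - c)) y = deriv b (y - c) := by
    intro c y
    have h1 : HasDerivAt (fun z : ℝ => b (z - c)) (deriv b (y - c) * 1) y :=
      (hbdiff (y - c)).hasDerivAt.comp y ((hasDerivAt_id y).sub_const c)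
    simpa using h1.deriv
  -- the travelling-wave ODE at every point
  have hODE : ∀ ξ : ℝ, deriv (fun ζ => Q (deriv b ζ)) ξ
      = deriv f (b ξ) * deriv b ξ - s * deriv b ξ := by
    intro ξ
    have h := hpde 1 (ξ + s) one_pos
    have hx : ξ + s - s * 1 = ξ := by ring
    -- term 1
    have h1 : HasDerivAt (fun τ : ℝ => b (ξ + s - s * τ)) (deriv b ξ * (-s)) 1 := by
      have hi : HasDerivAt (fun τ : ℝ => ξ + s - s * τ) (-(s * 1)) 1 :=
        (((hasDerivAt_id (1:ℝ)).const_mul s)).const_sub (ξ + s)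
      have := (hbdiff (ξ + s - s * 1)).hasDerivAt.comp 1 hi
      rw [hx] at this
      simpa [mul_comm, Function.comp_def] using this
    -- term 2
    have h2 : HasDerivAt (fun y : ℝ => f (b (y - s * 1)))
        (deriv f (b ξ) * (deriv b ξ * 1)) (ξ + s) := by
      have hi : HasDerivAt (fun y : ℝ => y - s * 1) 1 (ξ + s) :=
        (hasDerivAt_id (ξ + s)).sub_const (s * 1)
      have hbi : HasDerivAt (fun y : ℝ => b (y - s * 1)) (deriv b ξ * 1) (ξ + s) := by
        have := (hbdiff (ξ + s - s * 1)).hasDerivAt.comp (ξ + s) hi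
        rwa [hx] at this
      have := (hfdiff (b (ξ + s - s * 1))).hasDerivAt.comp (ξ + s) hbi
      rwa [hx] at this
    -- term 3
    have h3 : HasDerivAt (fun y : ℝ => Q (deriv (fun z => b (z - s * 1)) y))
        (deriv (fun ζ => Q (deriv b ζ)) ξ * 1) (ξ + s) := by
      have heq : (fun y : ℝ => Q (deriv (fun z => b (z - s * 1)) y))
          = fun y : ℝ => Q (deriv b (y - s * 1)) := by
        funext y; rw [hinner (s * 1) y]
      rw [heq]
      have hi : HasDerivAt (fun y : ℝ => y - s * 1) 1 (ξ + s) :=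
        (hasDerivAt_id (ξ + s)).sub_const (s * 1)
      have := ((hQb (ξ + s - s * 1)).hasDerivAt).comp (ξ + s) hi
      rwa [hx] at this
    rw [h1.deriv, h2.deriv, h3.deriv] at h
    nlinarith [h]
  -- the conserved quantity
  set g : ℝ → ℝ := fun ξ => Q (deriv b ξ) - f (b ξ) + s * b ξ with hg
  have hgd : ∀ ξ : ℝ, HasDerivAt g 0 ξ := by
    intro ξ
    have h1 : HasDerivAt (fun ζ => Q (deriv b ζ)) (deriv (fun ζ => Q (deriv b ζ)) ξ) ξ :=
      (hQb ξ).hasDerivAt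
    have h2 : HasDerivAt (fun ζ => f (b ζ)) (deriv f (b ξ) * deriv b ξ) ξ :=
      (hfdiff (b ξ)).hasDerivAt.comp ξ (hbdiff ξ).hasDerivAt
    have h3 : HasDerivAt (fun ζ => s * b ζ) (s * deriv b ξ) ξ :=
      (hbdiff ξ).hasDerivAt.const_mul s
    have h4 := (h1.sub h2).add h3
    have : deriv (fun ζ => Q (deriv b ζ)) ξ - deriv f (b ξ) * deriv b ξ + s * deriv b ξ = 0 := by
      rw [hODE ξ]; ring
    rw [this] at h4
    exact h4
  have hgconst : ∀ ξ : ℝ, g ξ = g 0 :=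
    fun ξ => is_const_of_deriv_eq_zero (fun x => (hgd x).differentiableAt)
      (fun x => (hgd x).deriv) ξ 0
  -- limits of g at ±∞
  have hQcont := hQdiff.continuous
  have hfcont := hfdiff.continuous
  have hgbot : Tendsto g atBot (𝓝 (0 - f bm + s * bm)) := by
    have t1 : Tendsto (fun ξ => Q (deriv b ξ)) atBot (𝓝 0) := by
      have := (hQcont.tendsto 0).comp hb'm
      simpa [hQ0, Function.comp_def] using this
    have t2 : Tendsto (fun ξ => f (b ξ)) atBot (𝓝 (f bm)) := (hfcont.tendsto bm).comp hbm
    have t3 : Tendsto (fun ξ => s * b ξ) atBot (𝓝 (s * bm)) := hbm.const_mul s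
    exact (t1.sub t2).add t3
  have hgtop : Tendsto g atTop (𝓝 (0 - f bp + s * bp)) := by
    have t1 : Tendsto (fun ξ => Q (deriv b ξ)) atTop (𝓝 0) := by
      have := (hQcont.tendsto 0).comp hb'p
      simpa [hQ0, Function.comp_def] using this
    have t2 : Tendsto (fun ξ => f (b ξ)) atTop (𝓝 (f bp)) := (hfcont.tendsto bp).comp hbp
    have t3 : Tendsto (fun ξ => s * b ξ) atTop (𝓝 (s * bp)) := hbp.const_mul s
    exact (t1.sub t2).add t3
  have hgc : g = fun _ => g 0 := funext hgconst
  have hgt0b : Tendsto g atBot (𝓝 (g 0)) := by rw [hgc]; exact tendsto_const_nhds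
  have hgt0t : Tendsto g atTop (𝓝 (g 0)) := by rw [hgc]; exact tendsto_const_nhds
  have hc1 : g 0 = 0 - f bm + s * bm := tendsto_nhds_unique hgt0b hgbot
  have hc2 : g 0 = 0 - f bp + s * bp := tendsto_nhds_unique hgt0t hgtop
  -- Rankine–Hugoniot
  have hRH : f bp - f bm = s * (bp - bm) := by
    have := hc1.symm.trans hc2
    linarith [this]
  -- key pointwise identity
  have hkey : ∀ ξ : ℝ, Q (deriv b ξ) = f (b ξ) - s * b ξ + (s * bm - f bm) := by
    intro ξ
    have := hgconst ξ
    rw [hc1] at this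
    simp only [hg] at this
    linarith
  -- strict convexity
  have hsc : StrictConvexOn ℝ univ f :=
    strictConvexOn_of_deriv2_pos convex_univ hfcont.continuousOn
      (fun x _ => by simpa using hconv x)
  have hchord : ∀ v : ℝ, bm < v → v < bp → f v - s * v + (s * bm - f bm) < 0 := by
    intro v h1 h2
    set t : ℝ := (v - bm) / (bp - bm) with ht
    have hd : (0:ℝ) < bp - bm := by linarith
    have ht0 : 0 < t := div_pos (by linarith) hd
    have ht1 : t < 1 := (div_lt_one hd).2 (by linarith)
    have htv : t * (bp - bm) = v - bm := div_mul_cancel₀ _ (ne_of_gt hd)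
    have hcomb : (1 - t) * bm + t * bp = v := by nlinarith [htv]
    have := hsc.2 (mem_univ bm) (mem_univ bp) (ne_of_lt hlt)
      (by linarith : (0:ℝ) < 1 - t) ht0 (by ring)
    simp only [smul_eq_mul] at this
    rw [hcomb] at this
    have h5 : t * (f bp - f bm) = s * (v - bm) := by rw [hRH, ← htv]; ring
    linarith [this, h5]
  have hQmono : StrictMono Q := strictMono_of_deriv_pos hQ'
  have hneg : ∀ ξ : ℝ, bm < b ξ → b ξ < bp → deriv b ξ < 0 := by
    intro ξ h1 h2
    have hq : Q (deriv b ξ) < Q 0 := by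
      rw [hQ0, hkey ξ]; exact hchord (b ξ) h1 h2
    exact hQmono.lt_iff_lt.mp hq
  -- find the last crossing of level m
  set m : ℝ := (bm + bp) / 2 with hm
  have hm1 : bm < m := by simp only [hm]; linarith
  have hm2 : m < bp := by simp only [hm]; linarith
  obtain ⟨R, hR⟩ := eventually_atTop.mp (hbp.eventually_const_lt hm2)
  obtain ⟨L, hL⟩ := eventually_atBot.mp (hbm.eventually_lt_const hm1)
  set L1 : ℝ := min L R with hL1
  have hL1R : L1 ≤ R := min_le_right _ _
  have hbL1 : b L1 < m := hL (min L R) (min_le_left _ _)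
  have hbR : m < b R := hR R le_rfl
  obtain ⟨ξ0, hξ0mem, hξ0⟩ :=
    intermediate_value_Icc hL1R hbdiff.continuous.continuousOn ⟨le_of_lt hbL1, le_of_lt hbR⟩
  set K : Set ℝ := Icc ξ0 R ∩ b ⁻¹' {m} with hK
  have hKc : IsCompact K :=
    isCompact_Icc.inter_right (isClosed_singleton.preimage hbdiff.continuous)
  have hKne : K.Nonempty := ⟨ξ0, ⟨le_rfl, hξ0mem.2⟩, hξ0⟩
  set ξ1 : ℝ := sSup K with hξ1
  have hξ1mem : ξ1 ∈ K := hKc.sSup_mem hKne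
  have hbξ1 : b ξ1 = m := hξ1mem.2
  have hξ1R : ξ1 < R := lt_of_le_of_ne hξ1mem.1.2 (fun h => by rw [h] at hbξ1; linarith)
  have hgtm : ∀ ξ ∈ Ioc ξ1 R, m < b ξ := by
    intro ξ ⟨hξa, hξb⟩
    by_contra hle
    push_neg at hle
    obtain ⟨ζ, hζmem, hζ⟩ :=
      intermediate_value_Icc hξb hbdiff.continuous.continuousOn ⟨hle, le_of_lt hbR⟩
    have hζK : ζ ∈ K := ⟨⟨hξ1mem.1.1.trans (hξa.le.trans hζmem.1), hζmem.2⟩, hζ⟩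
    have : ζ ≤ ξ1 := le_csSup hKc.bddAbove hζK
    have : ξ1 < ζ := lt_of_lt_of_le hξa hζmem.1
    linarith
  have hb'neg : deriv b ξ1 < 0 := hneg ξ1 (hbξ1 ▸ hm1) (hbξ1 ▸ hm2)
  -- derivative negative contradicts b > m just to the right
  have hslope := hasDerivAt_iff_tendsto_slope.mp (hbdiff ξ1).hasDerivAt
  have hev1 : ∀ᶠ ξ in 𝓝[>] ξ1, slope b ξ1 ξ < 0 :=
    (hslope.mono_left (nhdsWithin_mono ξ1 (fun y hy => ne_of_gt hy))).eventually_lt_const hb'neg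
  have hev2 : Ioc ξ1 R ∈ 𝓝[>] ξ1 := Ioc_mem_nhdsGT_of_mem ⟨le_rfl, hξ1R⟩
  obtain ⟨ξ, hs1, hs2⟩ := (hev1.and hev2).exists
  have hpos : 0 < ξ - ξ1 := sub_pos.2 hs2.1
  have hslt : (b ξ - b ξ1) / (ξ - ξ1) < 0 := by rwa [slope_def_field] at hs1
  have hlt2 : b ξ - b ξ1 < 0 := by
    rcases div_neg_iff.mp hslt with ⟨h1, h2⟩ | ⟨h1, h2⟩
    · linarith
    · exact h1
  have hgt2 := hgtm ξ hs2
  rw [hbξ1] at hlt2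
  linarith
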